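/- Let T be an m-dimensional linear subspace and V an (m−1)-dimensional linear subspace of ℝ^{m+n}, and let p_T, p_V, p_{V^⊥}, p_{T^⊥} denote the corresponding orthogonal projections. Then the trace of p_{V^⊥} ∘ p_T equals 1 + ‖p_V ∘ p_{T^⊥}‖²_{HS}, where ‖·‖_{HS} is the Hilbert–Schmidt norm. Equivalently, if τ₁, …, τ_m is an orthonormal basis of T, then ∑ᵢ ⟨τᵢ, p_{V^⊥}(τᵢ)⟩ = 1 + ‖p_V ∘ p_{T^⊥}‖²_{HS}. -/

import Mathlib

open scoped BigOperators InnerProductSpace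

private lemma inner_proj_eq_sum {E : Type*} [NormedAddCommGroup E] [InnerProductSpace ℝ E]
    (K : Submodule ℝ E) [K.HasOrthogonalProjection] {ι : Type*} [Fintype ι]
    (b : OrthonormalBasis ι ℝ K) (x : E) :
    ⟪x, (K.orthogonalProjectionOnto x : E)⟫_ℝ
      = ∑ k, ⟪x, (b k : E)⟫_ℝ * ⟪(b k : E), x⟫_ℝ := by
  have h := b.sum_inner_mul_inner (K.orthogonalProjectionOnto x) (K.orthogonalProjectionOnto x)
  simp only [Submodule.inner_orthogonalProjectionOnto_eq_of_mem_right,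
    Submodule.inner_orthogonalProjectionOnto_eq_of_mem_left] at h
  rw [real_inner_comm]; exact h.symm

set_option maxHeartbeats 1000000 in
/-- Trace identity: for an `m`-dimensional subspace `T` and an `(m-1)`-dimensional
subspace `V` of `ℝ^{m+n}`, `tr (p_{V^⊥} ∘ p_T) = 1 + ‖p_V ∘ p_{T^⊥}‖²_{HS}`, expressed via an
orthonormal basis `τ` of `T` and the standard orthonormal basis of the ambient space. -/
theorem stmt_2 {m n : ℕ} (hm : 1 ≤ m)
    (T V : Submodule ℝ (EuclideanSpace ℝ (Fin (m + n))))
    (hT : Module.finrank ℝ T = m) (hV : Module.finrank ℝ V = m - 1)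
    (τ : OrthonormalBasis (Fin m) ℝ T) :
    ∑ i, ⟪(τ i : EuclideanSpace ℝ (Fin (m + n))),
        (τ i : EuclideanSpace ℝ (Fin (m + n)))
          - (V.orthogonalProjectionOnto (τ i : EuclideanSpace ℝ (Fin (m + n))) :
              EuclideanSpace ℝ (Fin (m + n)))⟫_ℝ
      = 1 + ∑ j, ‖(V.orthogonalProjectionOnto
          (EuclideanSpace.basisFun (Fin (m + n)) ℝ j
            - (T.orthogonalProjectionOnto (EuclideanSpace.basisFun (Fin (m + n)) ℝ j) :
                EuclideanSpace ℝ (Fin (m + n)))) : EuclideanSpace ℝ (Fin (m + n)))‖ ^ 2 := by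
  classical
  set E := EuclideanSpace ℝ (Fin (m + n))
  let σ : OrthonormalBasis (Fin (Module.finrank ℝ V)) ℝ V := stdOrthonormalBasis ℝ V
  let e : OrthonormalBasis (Fin (m + n)) ℝ E := EuclideanSpace.basisFun (Fin (m + n)) ℝ
  -- elements of `Tᗮ` obtained from σ
  set u : Fin (Module.finrank ℝ V) → E :=
    fun k => (σ k : E) - (T.orthogonalProjectionOnto (σ k : E) : E) with hu
  -- the common double sum
  set S : ℝ := ∑ k, ∑ i, ⟪(σ k : E), (τ i : E)⟫_ℝ * ⟪(τ i : E), (σ k : E)⟫_ℝ with hS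
  -- LHS = m - S
  have hτnorm : ∀ i, ⟪(τ i : E), (τ i : E)⟫_ℝ = 1 := by
    intro i
    have := τ.orthonormal.1 i
    rw [← Submodule.coe_inner] at *
    rw [@real_inner_self_eq_norm_sq]
    simp [this]
  have hL : (∑ i, ⟪(τ i : E), (τ i : E) - (V.orthogonalProjectionOnto (τ i : E) : E)⟫_ℝ)
      = (m : ℝ) - S := by
    have h1 : ∀ i, ⟪(τ i : E), (τ i : E) - (V.orthogonalProjectionOnto (τ i : E) : E)⟫_ℝ
        = 1 - ∑ k, ⟪(τ i : E), (σ k : E)⟫_ℝ * ⟪(σ k : E), (τ i : E)⟫_ℝ := by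
      intro i
      rw [inner_sub_right, hτnorm i, inner_proj_eq_sum V σ]
    rw [Finset.sum_congr rfl fun i _ => h1 i, Finset.sum_sub_distrib]
    simp only [Finset.sum_const, Finset.card_univ, Fintype.card_fin, nsmul_eq_mul, mul_one]
    rw [hS, Finset.sum_comm]
    ring_nf
    congr 1
    refine Finset.sum_congr rfl fun i _ => Finset.sum_congr rfl fun k _ => ?_
    rw [mul_comm]
  -- each RHS term, summed over j, for fixed k
  have hR : (∑ j, ‖(V.orthogonalProjectionOnto
        (e j - (T.orthogonalProjectionOnto (e j) : E)) : E)‖ ^ 2)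
      = ((Module.finrank ℝ V : ℝ)) - S := by
    -- rewrite each summand as a sum over k
    have h2 : ∀ j, ‖(V.orthogonalProjectionOnto (e j - (T.orthogonalProjectionOnto (e j) : E)) : E)‖ ^ 2
        = ∑ k, ⟪e j, u k⟫_ℝ * ⟪u k, e j⟫_ℝ := by
      intro j
      set w : E := e j - (T.orthogonalProjectionOnto (e j) : E) with hw
      have hnorm : ‖(V.orthogonalProjectionOnto w : E)‖ ^ 2
          = ⟪w, (V.orthogonalProjectionOnto w : E)⟫_ℝ := by
        have := Submodule.inner_orthogonalProjectionOnto_eq_of_mem_left (K := V)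
          (V.orthogonalProjectionOnto w) w
        rw [Submodule.coe_inner] at this
        rw [← real_inner_self_eq_norm_sq, this]; exact real_inner_comm _ _
      rw [hnorm, inner_proj_eq_sum V σ w]
      refine Finset.sum_congr rfl fun k _ => ?_
      have hws : ⟪w, (σ k : E)⟫_ℝ = ⟪e j, u k⟫_ℝ := by
        rw [hw, hu, inner_sub_left, inner_sub_right]
        congr 1
        exact Submodule.inner_starProjection_left_eq_right T _ _
      have h' : ⟪(σ k : E), w⟫_ℝ = ⟪u k, e j⟫_ℝ := by
        rw [real_inner_comm, hws, real_inner_comm]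
      rw [hws, h']
    rw [Finset.sum_congr rfl fun j _ => h2 j, Finset.sum_comm]
    -- for each k : ∑ j ⟪e j, u k⟫⟪u k, e j⟫ = ‖u k‖² = 1 - ∑ i ⟪σ k, τ i⟫⟪τ i, σ k⟫
    have h3 : ∀ k, (∑ j, ⟪e j, u k⟫_ℝ * ⟪u k, e j⟫_ℝ)
        = 1 - ∑ i, ⟪(σ k : E), (τ i : E)⟫_ℝ * ⟪(τ i : E), (σ k : E)⟫_ℝ := by
      intro k
      have hpar : (∑ j, ⟪e j, u k⟫_ℝ * ⟪u k, e j⟫_ℝ) = ⟪u k, u k⟫_ℝ := by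
        have := e.sum_inner_mul_inner (u k) (u k)
        rw [← this]
        exact Finset.sum_congr rfl fun j _ => by rw [real_inner_comm (u k) (e j)]
      rw [hpar]
      have hortho : ⟪u k, (T.orthogonalProjectionOnto (σ k : E) : E)⟫_ℝ = 0 :=
        Submodule.starProjection_inner_eq_zero (K := T) (σ k : E) _ (Submodule.coe_mem _)
      have hσnorm : ⟪(σ k : E), (σ k : E)⟫_ℝ = 1 := by
        have := σ.orthonormal.1 k
        rw [← Submodule.coe_inner, real_inner_self_eq_norm_sq] at *
        simp [this]
      calc ⟪u k, u k⟫_ℝ = ⟪u k, (σ k : E)⟫_ℝ := by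
            rw [hu]; simp only []
            rw [inner_sub_right, hortho, sub_zero]
        _ = ⟪(σ k : E), (σ k : E)⟫_ℝ - ⟪(σ k : E), (T.orthogonalProjectionOnto (σ k : E) : E)⟫_ℝ := by
            rw [hu, inner_sub_left, real_inner_comm ((T.orthogonalProjectionOnto (σ k : E)) : E)]
        _ = 1 - ∑ i, ⟪(σ k : E), (τ i : E)⟫_ℝ * ⟪(τ i : E), (σ k : E)⟫_ℝ := by
            rw [hσnorm, inner_proj_eq_sum T τ]
    rw [Finset.sum_congr rfl fun k _ => h3 k, Finset.sum_sub_distrib]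
    simp [hS]
  rw [hL, hR, hV]
  have : ((m - 1 : ℕ) : ℝ) = (m : ℝ) - 1 := by
    rw [Nat.cast_sub hm]; norm_num
  rw [this]
  ring
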